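/- If 0 < a ≤ 1, then the only solution of m = tanh(a m) with m ∈ ℝ is m = 0. -/

import Mathlib

lemma my_tanh_lt_self {x : ℝ} (hx : 0 < x) : Real.tanh x < x := by
  have hmono : StrictMonoOn (fun y : ℝ => y * Real.cosh y - Real.sinh y) (Set.Ici 0) := by
    apply strictMonoOn_of_deriv_pos (convex_Ici 0)
    · fun_prop
    · intro y hy
      rw [interior_Ici] at hy
      have : deriv (fun y : ℝ => y * Real.cosh y - Real.sinh y) y = y * Real.sinh y := by
        have h1 : HasDerivAt (fun y : ℝ => y * Real.cosh y - Real.sinh y)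
            (1 * Real.cosh y + y * Real.sinh y - Real.cosh y) y := by
          exact ((hasDerivAt_id y).mul (Real.hasDerivAt_cosh y)).sub (Real.hasDerivAt_sinh y)
        rw [h1.deriv]; ring
      rw [this]
      exact mul_pos hy (Real.sinh_pos_iff.2 hy)
  have h0 : (0 : ℝ) * Real.cosh 0 - Real.sinh 0 < x * Real.cosh x - Real.sinh x :=
    hmono (Set.mem_Ici.2 (le_refl 0)) (Set.mem_Ici.2 (le_of_lt hx)) hx
  simp at h0
  rw [Real.tanh_eq_sinh_div_cosh, div_lt_iff₀ (Real.cosh_pos x)]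
  linarith

lemma my_key (a : ℝ) (ha : 0 < a) (ha1 : a ≤ 1) (m : ℝ) (hm0 : 0 < m)
    (hm : m = Real.tanh (a * m)) : False := by
  have h1 : Real.tanh (a * m) < a * m := my_tanh_lt_self (mul_pos ha hm0)
  nlinarith

/-- if `0 < a ≤ 1`, the only solution of `m = tanh(a m)` is `m = 0`. -/
theorem tanh_fixed_point_unique (a : ℝ) (ha : 0 < a) (ha1 : a ≤ 1)
    (m : ℝ) (hm : m = Real.tanh (a * m)) : m = 0 := by
  rcases lt_trichotomy m 0 with h | h | h
  · exfalso
    apply my_key a ha ha1 (-m) (by linarith)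
    rw [mul_neg, Real.tanh_neg, ← hm]
  · exact h
  · exact absurd hm (fun hm => my_key a ha ha1 m h hm)
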